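/- Let λ ≥ 0. Assume L̄|[0,+∞) is proper and L̄(t) < +∞ for some t > λ. Then there exists ε > 0 such that for every t ∈ (λ, λ+ε) one has L̄(t) = sup_{x∈ℝ} (t·x − l₀(x)), and this supremum is attained at some x_t ∈ ℝ, i.e. L̄(t) = t·x_t − l₀(x_t). -/

import Mathlib

open Filter MeasureTheory Set Topology

noncomputable section

/-- `c · log m` as an extended real number, where `m ∈ [0,∞]`. -/
def elog (c : ℝ) (m : ENNReal) : EReal := (c : EReal) * ENNReal.log m

/-- The generalized log-moment generating function `L̄` associated with the net
`(μ_α, c_α)` indexed by the filter `lf`: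
`L̄(t) = limsup_α c_α · log ∫ exp(t·x/c_α) dμ_α(x)`. -/
def genLogMGF {ι : Type*} (lf : Filter ι) (μ : ι → Measure ℝ) (c : ι → ℝ) (t : ℝ) : EReal :=
  Filter.limsup
    (fun i => elog (c i) (∫⁻ x : ℝ, ENNReal.ofReal (Real.exp (t * x / c i)) ∂ (μ i))) lf

/-- Legendre–Fenchel transform of an `EReal`-valued function on `ℝ`, evaluated at an
extended real argument: `L*(x) = sup_t (t·x − L(t))`. -/
def LegendreEE (L : ℝ → EReal) (x : EReal) : EReal := ⨆ t : ℝ, ((t : EReal) * x - L t)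

open Classical in
/-- The right derivative of a convex `EReal`-valued function at `t`, with the conventions
`L'_r(t) = +∞` when `L(s) = +∞` for all `s > t` and `L'_r(t) = -∞` when `L(s) = -∞` for
some `s > t`; otherwise it is the infimum of the right difference quotients. -/
def rightDerivE (L : ℝ → EReal) (t : ℝ) : EReal :=
  if ∀ s : ℝ, t < s → L s = ⊤ then ⊤
  else if ∃ s : ℝ, t < s ∧ L s = ⊥ then ⊥
  else ⨅ s ∈ Set.Ioi t, (L s - L t) * (((s - t)⁻¹ : ℝ) : EReal)

/-- The left derivative of a convex `EReal`-valued function at `t` (supremum of left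
difference quotients). -/
def leftDerivE (L : ℝ → EReal) (t : ℝ) : EReal :=
  ⨆ s ∈ Set.Iio t, (L t - L s) * (((t - s)⁻¹ : ℝ) : EReal)

/-- Right limit at `a` of an `EReal`-valued function (as a `limsup`; it coincides with
`lim_{t→a⁺} f(t)` whenever the latter exists, e.g. for monotone or convex `f`). -/
def rightLimE (f : ℝ → EReal) (a : ℝ) : EReal := Filter.limsup f (nhdsWithin a (Set.Ioi a))

/-- Left limit at `a` of an `EReal`-valued function (as a `limsup`; it coincides with
`lim_{t→a⁻} f(t)` whenever the latter exists). -/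
def leftLimE (f : ℝ → EReal) (a : ℝ) : EReal := Filter.limsup f (nhdsWithin a (Set.Iio a))

/-- `L` is affine on the interval `(a, b]`. -/
def AffineOnIoc (L : ℝ → EReal) (a b : ℝ) : Prop :=
  ∃ p q : ℝ, ∀ s ∈ Set.Ioc a b, L s = ((p * s + q : ℝ) : EReal)

/-- `λ̃ = sup {t > λ : L is affine on (λ, t]}` (equal to `λ` if there is no such `t`). -/
def tildeOf (L : ℝ → EReal) (lam : ℝ) : ℝ :=
  sSup (insert lam {t : ℝ | lam < t ∧ AffineOnIoc L lam t})

/-- Differentiability at `t` of an `EReal`-valued function: `L(t)` is finite and the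
difference quotients converge to a (finite) real number. -/
def EDifferentiableAt (L : ℝ → EReal) (t : ℝ) : Prop :=
  (∃ r : ℝ, L t = (r : EReal)) ∧
  ∃ d : ℝ, Filter.Tendsto (fun s => (L s - L t) * (((s - t)⁻¹ : ℝ) : EReal))
    (nhdsWithin t {t}ᶜ) (nhds (d : EReal))

/-- The function `l₀(x) = − lim_{ε→0⁺} limsup_α c_α · log μ_α((x−ε, x+ε))` (the limit over
`ε` exists by monotonicity and equals the infimum). -/
def l0fun {ι : Type*} (lf : Filter ι) (μ : ι → Measure ℝ) (c : ι → ℝ) (x : ℝ) : EReal :=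
  - ⨅ ε ∈ Set.Ioi (0:ℝ),
      Filter.limsup (fun i => elog (c i) (μ i (Set.Ioo (x - ε) (x + ε)))) lf

/-- `L` restricted to `[0,∞)` is proper: `(−∞,+∞]`-valued with at least one finite value. -/
def LbarProper (L : ℝ → EReal) : Prop :=
  (∀ t : ℝ, 0 ≤ t → L t ≠ ⊥) ∧ ∃ t : ℝ, 0 ≤ t ∧ L t ≠ ⊤

/-- `μ([x, y])` for extended-real endpoints `x, y`, with `μ` regarded as a measure on
`[-∞, +∞]`. -/
def muIccE (μ : Measure ℝ) (x y : EReal) : ENNReal :=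
  μ {z : ℝ | x ≤ (z : EReal) ∧ (z : EReal) ≤ y}

/-- `μ((x, y))` for extended-real endpoints `x, y`. -/
def muIooE (μ : Measure ℝ) (x y : EReal) : ENNReal :=
  μ {z : ℝ | x < (z : EReal) ∧ (z : EReal) < y}

open Classical in
/-- The Legendre transform extended to `[-∞,+∞]` by continuity, with the paper's
convention `L̄*(−∞) = −L̄(0⁺)`. -/
def LegendreExt (L : ℝ → EReal) (x : EReal) : EReal :=
  if x = ⊥ then -(rightLimE L 0) else if x = ⊤ then ⊤ else LegendreEE L x

end

noncomputable section

namespace Aux13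
open Real ENNReal

/-! ### EReal helpers -/

lemma ereal_le_of_forall_le_add {x y : EReal} (h : ∀ δ : ℝ, 0 < δ → x ≤ (δ : EReal) + y) :
    x ≤ y := by
  induction y using EReal.rec with
  | bot =>
    have := h 1 one_pos
    simpa using this
  | coe y =>
    induction x using EReal.rec with
    | bot => exact bot_le
    | coe x =>
      norm_cast
      refine le_of_forall_sub_le fun δ hδ => ?_
      have := h δ hδ
      rw [← EReal.coe_add] at this
      exact_mod_cast sub_le_iff_le_add'.2 (by exact_mod_cast this)
    | top =>
      have := h 1 one_pos
      rw [← EReal.coe_add] at this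
      exact absurd (top_le_iff.1 this) (EReal.coe_ne_top _)
  | top => exact le_top

lemma ereal_coe_le_of_forall_sub_le {r : ℝ} {a : EReal}
    (h : ∀ δ : ℝ, 0 < δ → ((r - δ : ℝ) : EReal) ≤ a) : (r : EReal) ≤ a := by
  refine ereal_le_of_forall_le_add fun δ hδ => ?_
  have := h δ hδ
  induction a using EReal.rec with
  | bot => exact absurd (le_bot_iff.1 this) (EReal.coe_ne_bot _)
  | coe a =>
    rw [← EReal.coe_add]
    exact_mod_cast by linarith [show r - δ ≤ a from by exact_mod_cast this]
  | top => exact le_top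

lemma ereal_const_mul_add {r : ℝ} (hr : 0 < r) (u v : EReal) :
    (r : EReal) * (u + v) = (r : EReal) * u + (r : EReal) * v := by
  induction u using EReal.rec with
  | bot => simp [EReal.coe_mul_bot_of_pos hr, EReal.bot_add]
  | coe u =>
    induction v using EReal.rec with
    | bot => simp [EReal.coe_mul_bot_of_pos hr, EReal.add_bot]
    | coe v => norm_cast; ring
    | top => simp [EReal.coe_mul_top_of_pos hr, ← EReal.coe_mul, EReal.coe_add_top]
  | top =>
    induction v using EReal.rec with
    | bot => simp [EReal.coe_mul_bot_of_pos hr, EReal.coe_mul_top_of_pos hr]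
    | coe v => simp [EReal.coe_mul_top_of_pos hr, ← EReal.coe_mul, EReal.top_add_coe]
    | top => simp [EReal.coe_mul_top_of_pos hr]

lemma ereal_monotone_const_mul {r : ℝ} (hr : 0 ≤ r) :
    Monotone fun x : EReal => (r : EReal) * x := fun _ _ h =>
  mul_le_mul_of_nonneg_left h (by exact_mod_cast hr)

lemma ereal_continuous_const_mul {r : ℝ} (hr : r ≠ 0) :
    Continuous fun x : EReal => (r : EReal) * x := by
  rw [continuous_iff_continuousAt]
  intro x
  have : ContinuousAt (fun p : EReal × EReal => p.1 * p.2) ((r : EReal), x) :=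
    EReal.continuousAt_mul (p := ((r : EReal), x))
      (Or.inl (by simpa using hr)) (Or.inl (by simpa using hr))
      (Or.inl (by simp)) (Or.inl (by simp))
  exact this.comp (Continuous.continuousAt (by continuity))

lemma ereal_continuous_const_add (r : ℝ) :
    Continuous fun x : EReal => (r : EReal) + x := by
  rw [continuous_iff_continuousAt]
  intro x
  have : ContinuousAt (fun p : EReal × EReal => p.1 + p.2) ((r : EReal), x) :=
    EReal.continuousAt_add (p := ((r : EReal), x))
      (Or.inl (by simp)) (Or.inl (by simp))
  exact this.comp (Continuous.continuousAt (by continuity))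

variable {ι : Type*} {lf : Filter ι}

lemma limsup_const_add [lf.NeBot] (r : ℝ) (u : ι → EReal) :
    Filter.limsup (fun i => (r : EReal) + u i) lf = (r : EReal) + Filter.limsup u lf := by
  have hmono : Monotone fun x : EReal => (r : EReal) + x := fun _ _ h => add_le_add_right h _
  exact (hmono.map_limsup_of_continuousAt u ((ereal_continuous_const_add r).continuousAt)).symm

lemma limsup_const_mul [lf.NeBot] {r : ℝ} (hr : 0 < r) (u : ι → EReal) :
    Filter.limsup (fun i => (r : EReal) * u i) lf = (r : EReal) * Filter.limsup u lf := by
  exact ((ereal_monotone_const_mul hr.le).map_limsup_of_continuousAt u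
    ((ereal_continuous_const_mul hr.ne').continuousAt)).symm

/-! ### elog helpers -/

lemma elog_mono {c : ℝ} (hc : 0 ≤ c) {m m' : ℝ≥0∞} (h : m ≤ m') : elog c m ≤ elog c m' :=
  mul_le_mul_of_nonneg_left (ENNReal.log_monotone h) (by exact_mod_cast hc)

lemma elog_mul {c : ℝ} (hc : 0 < c) (a b : ℝ≥0∞) :
    elog c (a * b) = elog c a + elog c b := by
  unfold elog
  rw [ENNReal.log_mul_add, ereal_const_mul_add hc]

lemma elog_ofReal_exp {c : ℝ} (hc : 0 < c) (r : ℝ) :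
    elog c (ENNReal.ofReal (Real.exp r)) = ((c * r : ℝ) : EReal) := by
  unfold elog
  rw [ENNReal.log_ofReal_of_pos (Real.exp_pos r), Real.log_exp, ← EReal.coe_mul]

lemma elog_le_zero {c : ℝ} (hc : 0 ≤ c) {m : ℝ≥0∞} (h : m ≤ 1) : elog c m ≤ 0 := by
  have : ENNReal.log m ≤ 0 := by simpa using h
  calc elog c m ≤ (c : EReal) * 0 := mul_le_mul_of_nonneg_left this (by exact_mod_cast hc)
  _ = 0 := by simp

lemma elog_max {c : ℝ} (hc : 0 ≤ c) (a b : ℝ≥0∞) :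
    elog c (max a b) = max (elog c a) (elog c b) := by
  rcases le_total a b with h | h
  · rw [max_eq_right h, max_eq_right (elog_mono hc h)]
  · rw [max_eq_left h, max_eq_left (elog_mono hc h)]

/-! ### MGF integral basics -/

def Fm (μ : Measure ℝ) (c : ℝ) (t : ℝ) : ℝ≥0∞ :=
  ∫⁻ x : ℝ, ENNReal.ofReal (Real.exp (t * x / c)) ∂ μ

lemma measurable_integrand (t c : ℝ) :
    Measurable fun x : ℝ => ENNReal.ofReal (Real.exp (t * x / c)) := by
  fun_prop

lemma genLogMGF_eq {ι : Type*} (lf : Filter ι) (μ : ι → Measure ℝ) (c : ι → ℝ) (t : ℝ) :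
    genLogMGF lf μ c t = Filter.limsup (fun i => elog (c i) (Fm (μ i) (c i) t)) lf := rfl

lemma Fm_pos (μ : Measure ℝ) [IsProbabilityMeasure μ] (c t : ℝ) : 0 < Fm μ c t := by
  rw [Fm, lintegral_pos_iff_support (measurable_integrand t c)]
  have : (Function.support fun x : ℝ => ENNReal.ofReal (Real.exp (t * x / c))) = Set.univ := by
    ext x
    simp [Function.mem_support, ENNReal.ofReal_eq_zero, not_le, Real.exp_pos]
  rw [this]
  simp

lemma Fm_zero (μ : Measure ℝ) [IsProbabilityMeasure μ] (c : ℝ) : Fm μ c 0 = 1 := by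
  rw [Fm]
  simp

lemma genLogMGF_zero {ι : Type*} (lf : Filter ι) [lf.NeBot] (μ : ι → Measure ℝ)
    [∀ i, IsProbabilityMeasure (μ i)] (c : ι → ℝ) : genLogMGF lf μ c 0 = 0 := by
  rw [genLogMGF_eq]
  have : (fun i => elog (c i) (Fm (μ i) (c i) 0)) = fun _ => (0 : EReal) := by
    funext i
    rw [Fm_zero]
    simp [elog]
  rw [this, limsup_const]

/-- Hölder inequality for the MGF integrals. -/
lemma Fm_holder (μ : Measure ℝ) (c : ℝ) {θ : ℝ} (hθ0 : 0 < θ) (hθ1 : θ < 1) (a b : ℝ) :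
    Fm μ c (θ * a + (1 - θ) * b) ≤ (Fm μ c a) ^ θ * (Fm μ c b) ^ (1 - θ) := by
  have h1θ : 0 < 1 - θ := by linarith
  have hpq : (1/θ : ℝ).HolderConjugate (1/(1-θ)) := by
    constructor
    · rw [one_div, inv_inv, one_div, inv_inv, inv_one]; ring
    · positivity
    · positivity
  have hf : AEMeasurable (fun x : ℝ => (ENNReal.ofReal (Real.exp (a * x / c))) ^ θ) μ :=
    ((measurable_integrand a c).pow_const _).aemeasurable
  have hg : AEMeasurable (fun x : ℝ => (ENNReal.ofReal (Real.exp (b * x / c))) ^ (1-θ)) μ :=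
    ((measurable_integrand b c).pow_const _).aemeasurable
  have key := ENNReal.lintegral_mul_le_Lp_mul_Lq μ hpq hf hg
  have hprod : ∀ x : ℝ,
      (ENNReal.ofReal (Real.exp (a * x / c))) ^ θ * (ENNReal.ofReal (Real.exp (b * x / c))) ^ (1-θ)
      = ENNReal.ofReal (Real.exp ((θ * a + (1 - θ) * b) * x / c)) := by
    intro x
    rw [ENNReal.ofReal_rpow_of_pos (Real.exp_pos _), ENNReal.ofReal_rpow_of_pos (Real.exp_pos _),
      ← Real.exp_mul, ← Real.exp_mul, ← ENNReal.ofReal_mul (by positivity), ← Real.exp_add]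
    congr 1
    field_simp
  have hLp : ∀ (u : ℝ) (η : ℝ), 0 < η →
      (∫⁻ x : ℝ, ((ENNReal.ofReal (Real.exp (u * x / c))) ^ η) ^ (1/η) ∂ μ) ^ (1/(1/η))
        = (Fm μ c u) ^ η := by
    intro u η hη
    have : ∀ x : ℝ, ((ENNReal.ofReal (Real.exp (u * x / c))) ^ η) ^ (1/η)
        = ENNReal.ofReal (Real.exp (u * x / c)) := by
      intro x
      rw [← ENNReal.rpow_mul, mul_one_div_cancel hη.ne', ENNReal.rpow_one]
    simp_rw [this, one_div_one_div, Fm]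
  calc Fm μ c (θ * a + (1 - θ) * b)
      = ∫⁻ x : ℝ, (ENNReal.ofReal (Real.exp (a * x / c))) ^ θ
          * (ENNReal.ofReal (Real.exp (b * x / c))) ^ (1-θ) ∂ μ := by
        rw [Fm]; exact lintegral_congr fun x => (hprod x).symm
    _ ≤ _ := by
        refine key.trans_eq ?_
        rw [hLp a θ hθ0, hLp b (1-θ) h1θ]

/-! ### Convexity of genLogMGF -/

section Convexity

variable {ι : Type*} (lf : Filter ι) [lf.NeBot] (μ : ι → Measure ℝ)
  [∀ i, IsProbabilityMeasure (μ i)] (c : ι → ℝ) (hc : ∀ i, 0 < c i)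

omit [lf.NeBot] [∀ i, IsProbabilityMeasure (μ i)] in
lemma elog_rpow (η : ℝ) (m : ℝ≥0∞) {d : ℝ} :
    elog d (m ^ η) = (η : EReal) * elog d m := by
  unfold elog
  rw [ENNReal.log_rpow, mul_left_comm]

include hc

lemma genLogMGF_convex {a b θ : ℝ} (ra rb : ℝ) (hθ0 : 0 < θ) (hθ1 : θ < 1)
    (ha : genLogMGF lf μ c a = (ra : EReal)) (hb : genLogMGF lf μ c b = (rb : EReal)) :
    genLogMGF lf μ c (θ * a + (1 - θ) * b) ≤ ((θ * ra + (1 - θ) * rb : ℝ) : EReal) := by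
  have h1θ : 0 < 1 - θ := by linarith
  have hpt : ∀ i, elog (c i) (Fm (μ i) (c i) (θ * a + (1 - θ) * b))
      ≤ (θ : EReal) * elog (c i) (Fm (μ i) (c i) a)
        + ((1 - θ : ℝ) : EReal) * elog (c i) (Fm (μ i) (c i) b) := by
    intro i
    calc elog (c i) (Fm (μ i) (c i) (θ * a + (1 - θ) * b))
        ≤ elog (c i) ((Fm (μ i) (c i) a) ^ θ * (Fm (μ i) (c i) b) ^ (1 - θ)) :=
          elog_mono (hc i).le (Fm_holder (μ i) (c i) hθ0 hθ1 a b)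
      _ = _ := by
          rw [elog_mul (hc i), elog_rpow, elog_rpow]
  have hlimsup_a : Filter.limsup (fun i => (θ : EReal) * elog (c i) (Fm (μ i) (c i) a)) lf
      = ((θ * ra : ℝ) : EReal) := by
    rw [limsup_const_mul hθ0, ← genLogMGF_eq, ha, ← EReal.coe_mul]
  have hlimsup_b : Filter.limsup
      (fun i => ((1 - θ : ℝ) : EReal) * elog (c i) (Fm (μ i) (c i) b)) lf
      = (((1 - θ) * rb : ℝ) : EReal) := by
    rw [limsup_const_mul h1θ, ← genLogMGF_eq, hb, ← EReal.coe_mul]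
  calc genLogMGF lf μ c (θ * a + (1 - θ) * b)
      ≤ Filter.limsup (fun i => (θ : EReal) * elog (c i) (Fm (μ i) (c i) a)
          + ((1 - θ : ℝ) : EReal) * elog (c i) (Fm (μ i) (c i) b)) lf := by
        rw [genLogMGF_eq]
        exact Filter.limsup_le_limsup (Filter.Eventually.of_forall hpt)
    _ ≤ ((θ * ra : ℝ) : EReal) + (((1 - θ) * rb : ℝ) : EReal) := by
        refine (EReal.limsup_add_le ?_ ?_).trans_eq ?_
        · rw [hlimsup_a]; exact Or.inl (EReal.coe_ne_bot _)
        · rw [hlimsup_a]; exact Or.inl (EReal.coe_ne_top _)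
        · rw [hlimsup_a, hlimsup_b]
    _ = _ := by norm_cast

lemma genLogMGF_real_on_Icc {t0 : ℝ} (ht0 : 0 < t0) (r0 : ℝ)
    (h0 : genLogMGF lf μ c t0 = (r0 : EReal))
    (hbot : ∀ s : ℝ, 0 ≤ s → genLogMGF lf μ c s ≠ ⊥) :
    ∀ s ∈ Icc (0:ℝ) t0, ∃ r : ℝ, genLogMGF lf μ c s = (r : EReal) := by
  intro s hs
  rcases eq_or_lt_of_le hs.1 with h | hpos
  · exact ⟨0, by rw [← h, genLogMGF_zero lf μ c]; norm_cast⟩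
  rcases eq_or_lt_of_le hs.2 with h | hlt
  · exact ⟨r0, by rw [h, h0]⟩
  set θ : ℝ := 1 - s / t0 with hθdef
  have hθ0 : 0 < θ := by
    have : s / t0 < 1 := (div_lt_one ht0).2 hlt
    simp [hθdef]; linarith
  have hθ1 : θ < 1 := by
    have : 0 < s / t0 := div_pos hpos ht0
    simp [hθdef]; linarith
  have hs_eq : s = θ * 0 + (1 - θ) * t0 := by
    have : s / t0 * t0 = s := div_mul_cancel₀ _ ht0.ne'
    rw [hθdef]; linear_combination -this
  have hle := genLogMGF_convex lf μ c hc (a := 0) (b := t0) 0 r0 hθ0 hθ1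
    (genLogMGF_zero lf μ c) h0
  rw [← hs_eq] at hle
  have hne_top : genLogMGF lf μ c s ≠ ⊤ := by
    intro h
    rw [h] at hle
    exact absurd (top_le_iff.1 hle) (EReal.coe_ne_top _)
  have hne_bot : genLogMGF lf μ c s ≠ ⊥ := hbot s hs.1
  lift genLogMGF lf μ c s to ℝ using ⟨hne_top, hne_bot⟩ with r
  exact ⟨r, rfl⟩

end Convexity

/-! ### The functions M and the Chebyshev lower bound -/

section Cheby

variable {ι : Type*} (lf : Filter ι) [lf.NeBot] (μ : ι → Measure ℝ)
  [∀ i, IsProbabilityMeasure (μ i)] (c : ι → ℝ) (hc : ∀ i, 0 < c i)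

def Mfun (x ε : ℝ) : EReal :=
  Filter.limsup (fun i => elog (c i) (μ i (Set.Ioo (x - ε) (x + ε)))) lf

lemma l0fun_eq (x : ℝ) : l0fun lf μ c x = - ⨅ ε ∈ Set.Ioi (0:ℝ), Mfun lf μ c x ε := rfl

include hc

lemma Mfun_le_zero (x ε : ℝ) : Mfun lf μ c x ε ≤ 0 := by
  have : ∀ i, elog (c i) (μ i (Set.Ioo (x - ε) (x + ε))) ≤ (0 : EReal) :=
    fun i => elog_le_zero (hc i).le prob_le_one
  calc Mfun lf μ c x ε ≤ Filter.limsup (fun _ => (0 : EReal)) lf :=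
        Filter.limsup_le_limsup (Filter.Eventually.of_forall this)
  _ = 0 := Filter.limsup_const 0

lemma Mfun_mono {x ε x' ε' : ℝ}
    (h : Set.Ioo (x - ε) (x + ε) ⊆ Set.Ioo (x' - ε') (x' + ε')) :
    Mfun lf μ c x ε ≤ Mfun lf μ c x' ε' :=
  Filter.limsup_le_limsup (Filter.Eventually.of_forall
    (fun i => elog_mono (hc i).le (measure_mono h)))

lemma cheby (t x ε : ℝ) (ht : 0 ≤ t) :
    ((t * (x - ε) : ℝ) : EReal) + Mfun lf μ c x ε ≤ genLogMGF lf μ c t := by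
  have hpt : ∀ i, ((t * (x - ε) : ℝ) : EReal) + elog (c i) (μ i (Set.Ioo (x - ε) (x + ε)))
      ≤ elog (c i) (Fm (μ i) (c i) t) := by
    intro i
    have hlow : ENNReal.ofReal (Real.exp (t * (x - ε) / c i)) * μ i (Set.Ioo (x - ε) (x + ε))
        ≤ Fm (μ i) (c i) t := by
      calc ENNReal.ofReal (Real.exp (t * (x - ε) / c i)) * μ i (Set.Ioo (x - ε) (x + ε))
          = ∫⁻ _ in Set.Ioo (x - ε) (x + ε), ENNReal.ofReal (Real.exp (t * (x - ε) / c i)) ∂ μ i :=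
            (setLIntegral_const _ _).symm
        _ ≤ ∫⁻ y in Set.Ioo (x - ε) (x + ε), ENNReal.ofReal (Real.exp (t * y / c i)) ∂ μ i := by
            refine setLIntegral_mono' measurableSet_Ioo fun y hy => ?_
            apply ENNReal.ofReal_le_ofReal
            apply Real.exp_le_exp.2
            gcongr
            · exact (hc i).le
            · exact hy.1.le
        _ ≤ Fm (μ i) (c i) t := setLIntegral_le_lintegral _ _
    calc ((t * (x - ε) : ℝ) : EReal) + elog (c i) (μ i (Set.Ioo (x - ε) (x + ε)))
        = elog (c i) (ENNReal.ofReal (Real.exp (t * (x - ε) / c i))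
            * μ i (Set.Ioo (x - ε) (x + ε))) := by
          rw [elog_mul (hc i), elog_ofReal_exp (hc i), mul_div_cancel₀ _ (hc i).ne']
      _ ≤ elog (c i) (Fm (μ i) (c i) t) := elog_mono (hc i).le hlow
  calc ((t * (x - ε) : ℝ) : EReal) + Mfun lf μ c x ε
      = Filter.limsup (fun i => ((t * (x - ε) : ℝ) : EReal)
          + elog (c i) (μ i (Set.Ioo (x - ε) (x + ε)))) lf := (limsup_const_add _ _).symm
    _ ≤ genLogMGF lf μ c t := Filter.limsup_le_limsup (Filter.Eventually.of_forall hpt)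

lemma cheby_l0 (t x : ℝ) (ht : 0 ≤ t) :
    ((t * x : ℝ) : EReal) - l0fun lf μ c x ≤ genLogMGF lf μ c t := by
  rw [l0fun_eq, sub_eq_add_neg, neg_neg]
  set a := ⨅ ε ∈ Set.Ioi (0:ℝ), Mfun lf μ c x ε with ha
  rcases eq_or_ne a ⊥ with hbot | hne
  · rw [hbot, EReal.add_bot]; exact bot_le
  have ha_le : a ≤ 0 := le_trans (iInf₂_le 1 (by norm_num : (1:ℝ) ∈ Set.Ioi (0:ℝ)))
    (Mfun_le_zero lf μ c hc x 1)
  have ha_ne_top : a ≠ ⊤ := fun h => by rw [h] at ha_le; exact absurd ha_le (by simp)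
  lift a to ℝ using ⟨ha_ne_top, hne⟩ with ar
  rw [← EReal.coe_add]
  refine ereal_coe_le_of_forall_sub_le fun δ hδ => ?_
  have hε : (0:ℝ) < δ / (t + 1) := by positivity
  have step : ((t * (x - δ / (t+1)) : ℝ) : EReal) + (ar : EReal) ≤ genLogMGF lf μ c t := by
    have h1 : (ar : EReal) ≤ Mfun lf μ c x (δ / (t+1)) :=
      le_of_eq_of_le ha (iInf₂_le _ (Set.mem_Ioi.2 hε))
    exact le_trans (add_le_add_right h1 _) (cheby lf μ c hc t x _ ht)
  refine le_trans ?_ step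
  rw [← EReal.coe_add, EReal.coe_le_coe_iff]
  have ht1 : (0:ℝ) < t + 1 := by linarith
  have h2 : t * (δ / (t+1)) ≤ δ := by
    rw [mul_div_assoc', div_le_iff₀ ht1]
    nlinarith
  nlinarith [h2]

lemma inf_Mfun_ge {x r K : ℝ} (hK : 0 ≤ K)
    (h : ∀ ε : ℝ, 0 < ε → ((r - K * ε : ℝ) : EReal) ≤ Mfun lf μ c x ε) :
    (r : EReal) ≤ ⨅ ε ∈ Set.Ioi (0:ℝ), Mfun lf μ c x ε := by
  refine ereal_coe_le_of_forall_sub_le fun δ hδ => ?_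
  refine le_iInf₂ fun ε hε => ?_
  have hε' : (0:ℝ) < ε := hε
  set ε1 := min ε (δ / (K + 1)) with hε1def
  have hε1pos : 0 < ε1 := lt_min hε' (by positivity)
  have hmono : Mfun lf μ c x ε1 ≤ Mfun lf μ c x ε := by
    refine Mfun_mono lf μ c hc (x := x) (ε := ε1) (x' := x) (ε' := ε) ?_
    apply Set.Ioo_subset_Ioo <;> [linarith [min_le_left ε (δ / (K + 1))];
      linarith [min_le_left ε (δ / (K + 1))]]
  refine le_trans ?_ (le_trans (h ε1 hε1pos) hmono)
  have hK1 : K * ε1 ≤ δ := by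
    have h1 : ε1 ≤ δ / (K + 1) := min_le_right _ _
    have h2 : K * ε1 ≤ K * (δ / (K + 1)) := mul_le_mul_of_nonneg_left h1 hK
    have h3 : K * (δ / (K + 1)) ≤ δ := by
      rw [mul_div_assoc', div_le_iff₀ (by linarith)]
      nlinarith
    linarith
  exact EReal.coe_le_coe_iff.2 (by linarith)

lemma convexOn_ell {t0 : ℝ} (ht0 : 0 < t0) (r0 : ℝ)
    (h0 : genLogMGF lf μ c t0 = (r0 : EReal))
    (hbot : ∀ s : ℝ, 0 ≤ s → genLogMGF lf μ c s ≠ ⊥) :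
    ConvexOn ℝ (Set.Icc 0 t0) (fun s => (genLogMGF lf μ c s).toReal) := by
  have hreal := genLogMGF_real_on_Icc lf μ c hc ht0 r0 h0 hbot
  refine ⟨convex_Icc _ _, ?_⟩
  intro a ha b hb wa wb hwa hwb hsum
  rcases eq_or_lt_of_le hwa with h | hwa'
  · have hwb1 : wb = 1 := by linarith
    simp [← h, hwb1]
  rcases eq_or_lt_of_le hwb with h | hwb'
  · have hwa1 : wa = 1 := by linarith
    simp [← h, hwa1]
  obtain ⟨ra, hra⟩ := hreal a ha
  obtain ⟨rb, hrb⟩ := hreal b hb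
  have hmem : wa • a + wb • b ∈ Set.Icc 0 t0 := (convex_Icc (0:ℝ) t0) ha hb hwa hwb hsum
  obtain ⟨rm, hrm⟩ := hreal _ hmem
  have hwa1 : wa < 1 := by linarith
  have hwb_eq : wb = 1 - wa := by linarith
  have hle := genLogMGF_convex lf μ c hc (a := a) (b := b) ra rb hwa' hwa1 hra hrb
  have hpt : wa • a + wb • b = wa * a + (1 - wa) * b := by
    rw [smul_eq_mul, smul_eq_mul, hwb_eq]
  rw [hpt] at hrm
  rw [hrm] at hle
  have hineq : rm ≤ wa * ra + (1 - wa) * rb := by exact_mod_cast hle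
  simp only [smul_eq_mul, hwb_eq]
  rw [hrm, hra, hrb, EReal.toReal_coe, EReal.toReal_coe, EReal.toReal_coe]
  exact hineq

end Cheby

/-! ### The tilting upper bound -/

section Tilt

variable {ι : Type*} (lf : Filter ι) [lf.NeBot] (μ : ι → Measure ℝ)
  [∀ i, IsProbabilityMeasure (μ i)] (c : ι → ℝ) (hc : ∀ i, 0 < c i)

lemma exp_div_bound {u v d : ℝ} (hd : 0 < d) (h : u ≤ v) :
    ENNReal.ofReal (Real.exp (u / d)) ≤ ENNReal.ofReal (Real.exp (v / d)) := by
  apply ENNReal.ofReal_le_ofReal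
  apply Real.exp_le_exp.2
  gcongr

lemma Fm_split (ν : Measure ℝ) {d : ℝ} (hd : 0 < d) (t x ε s1 s2 : ℝ) (ht : 0 ≤ t)
    (h1t : s1 < t) (hts2 : t < s2) :
    Fm ν d t ≤ ENNReal.ofReal (Real.exp ((t - s1) * (x - ε) / d)) * Fm ν d s1
      + ENNReal.ofReal (Real.exp (t * (x + ε) / d)) * ν (Set.Ioo (x - ε) (x + ε))
      + ENNReal.ofReal (Real.exp (-(s2 - t) * (x + ε) / d)) * Fm ν d s2 := by
  have hsplit : Fm ν d t ≤
      (∫⁻ y in Set.Iic (x - ε), ENNReal.ofReal (Real.exp (t * y / d)) ∂ ν)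
      + (∫⁻ y in Set.Ioo (x - ε) (x + ε), ENNReal.ofReal (Real.exp (t * y / d)) ∂ ν)
      + (∫⁻ y in Set.Ici (x + ε), ENNReal.ofReal (Real.exp (t * y / d)) ∂ ν) := by
    have hcover : (Set.univ : Set ℝ)
        = (Set.Iic (x - ε) ∪ Set.Ioo (x - ε) (x + ε)) ∪ Set.Ici (x + ε) := by
      ext y
      simp only [Set.mem_univ, true_iff, Set.mem_union, Set.mem_Iic, Set.mem_Ioo, Set.mem_Ici]
      rcases le_or_gt y (x - ε) with h | h
      · tauto
      · rcases le_or_gt (x + ε) y with h' | h'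
        · tauto
        · tauto
    calc Fm ν d t = ∫⁻ y in Set.univ, ENNReal.ofReal (Real.exp (t * y / d)) ∂ ν := by
          rw [Fm, Measure.restrict_univ]
      _ = ∫⁻ y in (Set.Iic (x - ε) ∪ Set.Ioo (x - ε) (x + ε)) ∪ Set.Ici (x + ε),
            ENNReal.ofReal (Real.exp (t * y / d)) ∂ ν := by rw [← hcover]
      _ ≤ _ := le_trans (lintegral_union_le _ _ _)
            (add_le_add_left (lintegral_union_le _ _ _) _)
  refine hsplit.trans (add_le_add (add_le_add ?_ ?_) ?_)
  · -- left tail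
    calc ∫⁻ y in Set.Iic (x - ε), ENNReal.ofReal (Real.exp (t * y / d)) ∂ ν
        ≤ ∫⁻ y in Set.Iic (x - ε),
            ENNReal.ofReal (Real.exp ((t - s1) * (x - ε) / d)) *
              ENNReal.ofReal (Real.exp (s1 * y / d)) ∂ ν := by
          refine setLIntegral_mono' measurableSet_Iic fun y hy => ?_
          rw [← ENNReal.ofReal_mul (by positivity), ← Real.exp_add, ← add_div]
          exact exp_div_bound hd (by nlinarith [Set.mem_Iic.1 hy])
      _ = ENNReal.ofReal (Real.exp ((t - s1) * (x - ε) / d)) *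
            ∫⁻ y in Set.Iic (x - ε), ENNReal.ofReal (Real.exp (s1 * y / d)) ∂ ν :=
          lintegral_const_mul' _ _ ENNReal.ofReal_ne_top
      _ ≤ _ := mul_le_mul_right (setLIntegral_le_lintegral _ _) _
  · -- middle
    calc ∫⁻ y in Set.Ioo (x - ε) (x + ε), ENNReal.ofReal (Real.exp (t * y / d)) ∂ ν
        ≤ ∫⁻ _ in Set.Ioo (x - ε) (x + ε),
            ENNReal.ofReal (Real.exp (t * (x + ε) / d)) ∂ ν := by
          refine setLIntegral_mono' measurableSet_Ioo fun y hy => ?_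
          exact exp_div_bound hd (by nlinarith [(Set.mem_Ioo.1 hy).2])
      _ = _ := setLIntegral_const _ _
  · -- right tail
    calc ∫⁻ y in Set.Ici (x + ε), ENNReal.ofReal (Real.exp (t * y / d)) ∂ ν
        ≤ ∫⁻ y in Set.Ici (x + ε),
            ENNReal.ofReal (Real.exp (-(s2 - t) * (x + ε) / d)) *
              ENNReal.ofReal (Real.exp (s2 * y / d)) ∂ ν := by
          refine setLIntegral_mono' measurableSet_Ici fun y hy => ?_
          rw [← ENNReal.ofReal_mul (by positivity), ← Real.exp_add, ← add_div]
          exact exp_div_bound hd (by nlinarith [Set.mem_Ici.1 hy])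
      _ = ENNReal.ofReal (Real.exp (-(s2 - t) * (x + ε) / d)) *
            ∫⁻ y in Set.Ici (x + ε), ENNReal.ofReal (Real.exp (s2 * y / d)) ∂ ν :=
          lintegral_const_mul' _ _ ENNReal.ofReal_ne_top
      _ ≤ _ := mul_le_mul_right (setLIntegral_le_lintegral _ _) _

lemma ereal_sub_const_le {r K : ℝ} {m : EReal} (h : (r : EReal) ≤ (K : EReal) + m) :
    ((r - K : ℝ) : EReal) ≤ m := by
  induction m using EReal.rec with
  | bot => rw [EReal.add_bot] at h; exact absurd (le_bot_iff.1 h) (EReal.coe_ne_bot _)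
  | coe m =>
    rw [← EReal.coe_add] at h
    have := EReal.coe_le_coe_iff.1 h
    exact_mod_cast by linarith
  | top => exact le_top

lemma elog_three_mul {d : ℝ} (hd : 0 < d) (m : ℝ≥0∞) :
    elog d (3 * m) = ((d * Real.log 3 : ℝ) : EReal) + elog d m := by
  rw [elog_mul hd]
  congr 1
  unfold elog
  rw [show (3:ℝ≥0∞) = ENNReal.ofReal 3 by norm_num,
    ENNReal.log_ofReal_of_pos (by norm_num), ← EReal.coe_mul]

include hc

lemma tilt (hc0 : Filter.Tendsto c lf (nhds (0:ℝ))) {t x ε s1 s2 rt r1 r2 : ℝ} (ht : 0 ≤ t)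
    (h1t : s1 < t) (hts2 : t < s2)
    (hLt : genLogMGF lf μ c t = (rt : EReal))
    (hL1 : genLogMGF lf μ c s1 = (r1 : EReal))
    (hL2 : genLogMGF lf μ c s2 = (r2 : EReal))
    (hleft : (t - s1) * (x - ε) + r1 < rt)
    (hright : -(s2 - t) * (x + ε) + r2 < rt) :
    ((rt - t * (x + ε) : ℝ) : EReal) ≤ Mfun lf μ c x ε := by
  set K1 := (t - s1) * (x - ε) with hK1
  set K2 := -(s2 - t) * (x + ε) with hK2
  set Kb := t * (x + ε) with hKb
  set A : ι → ℝ≥0∞ := fun i => ENNReal.ofReal (Real.exp (K1 / c i)) * Fm (μ i) (c i) s1 with hA'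
  set B : ι → ℝ≥0∞ := fun i =>
    ENNReal.ofReal (Real.exp (Kb / c i)) * μ i (Set.Ioo (x - ε) (x + ε)) with hB'
  set C : ι → ℝ≥0∞ := fun i => ENNReal.ofReal (Real.exp (K2 / c i)) * Fm (μ i) (c i) s2 with hC'
  have hlogA : ∀ i, elog (c i) (A i) = (K1 : EReal) + elog (c i) (Fm (μ i) (c i) s1) := by
    intro i
    rw [hA', elog_mul (hc i), elog_ofReal_exp (hc i), mul_div_cancel₀ _ (hc i).ne']
  have hlogB : ∀ i, elog (c i) (B i)
      = (Kb : EReal) + elog (c i) (μ i (Set.Ioo (x - ε) (x + ε))) := by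
    intro i
    rw [hB', elog_mul (hc i), elog_ofReal_exp (hc i), mul_div_cancel₀ _ (hc i).ne']
  have hlogC : ∀ i, elog (c i) (C i) = (K2 : EReal) + elog (c i) (Fm (μ i) (c i) s2) := by
    intro i
    rw [hC', elog_mul (hc i), elog_ofReal_exp (hc i), mul_div_cancel₀ _ (hc i).ne']
  have hlimA : Filter.limsup (fun i => elog (c i) (A i)) lf = ((K1 + r1 : ℝ) : EReal) := by
    rw [Filter.limsup_congr (Filter.Eventually.of_forall hlogA), limsup_const_add,
      ← genLogMGF_eq, hL1, ← EReal.coe_add]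
  have hlimB : Filter.limsup (fun i => elog (c i) (B i)) lf
      = (Kb : EReal) + Mfun lf μ c x ε := by
    rw [Filter.limsup_congr (Filter.Eventually.of_forall hlogB), limsup_const_add]
    rfl
  have hlimC : Filter.limsup (fun i => elog (c i) (C i)) lf = ((K2 + r2 : ℝ) : EReal) := by
    rw [Filter.limsup_congr (Filter.Eventually.of_forall hlogC), limsup_const_add,
      ← genLogMGF_eq, hL2, ← EReal.coe_add]
  have hsplit : ∀ i, elog (c i) (Fm (μ i) (c i) t)
      ≤ ((c i * Real.log 3 : ℝ) : EReal)
        + max (elog (c i) (A i)) (max (elog (c i) (B i)) (elog (c i) (C i))) := by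
    intro i
    have h1 : Fm (μ i) (c i) t ≤ 3 * max (A i) (max (B i) (C i)) := by
      refine (Fm_split (μ i) (hc i) t x ε s1 s2 ht h1t hts2).trans ?_
      have ha : A i ≤ max (A i) (max (B i) (C i)) := le_max_left _ _
      have hb : B i ≤ max (A i) (max (B i) (C i)) := le_trans (le_max_left _ _) (le_max_right _ _)
      have hcc : C i ≤ max (A i) (max (B i) (C i)) := le_trans (le_max_right _ _) (le_max_right _ _)
      calc A i + B i + C i ≤ max (A i) (max (B i) (C i)) + max (A i) (max (B i) (C i))
            + max (A i) (max (B i) (C i)) := add_le_add (add_le_add ha hb) hcc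
        _ = 3 * max (A i) (max (B i) (C i)) := by ring
    calc elog (c i) (Fm (μ i) (c i) t) ≤ elog (c i) (3 * max (A i) (max (B i) (C i))) :=
          elog_mono (hc i).le h1
      _ = ((c i * Real.log 3 : ℝ) : EReal)
          + max (elog (c i) (A i)) (max (elog (c i) (B i)) (elog (c i) (C i))) := by
          rw [elog_three_mul (hc i), elog_max (hc i).le, elog_max (hc i).le]
  have hδ : ∀ δ : ℝ, 0 < δ → (rt : EReal) ≤ (δ : EReal)
      + max ((K1 + r1 : ℝ) : EReal) (max ((Kb : EReal) + Mfun lf μ c x ε) ((K2 + r2 : ℝ) : EReal)) := by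
    intro δ hδpos
    have h3 : (0:ℝ) < Real.log 3 := Real.log_pos (by norm_num)
    have hev' : ∀ᶠ i in lf, c i < δ / Real.log 3 :=
      hc0 (Iio_mem_nhds (by positivity))
    have hev2 : ∀ᶠ i in lf, elog (c i) (Fm (μ i) (c i) t) ≤ (δ : EReal)
        + max (elog (c i) (A i)) (max (elog (c i) (B i)) (elog (c i) (C i))) := by
      filter_upwards [hev'] with i hi
      refine (hsplit i).trans (add_le_add_left ?_ _)
      have : c i * Real.log 3 ≤ δ := le_of_lt ((lt_div_iff₀ h3).1 hi)
      exact_mod_cast this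
    calc (rt : EReal) = genLogMGF lf μ c t := hLt.symm
      _ ≤ Filter.limsup (fun i => (δ : EReal)
          + max (elog (c i) (A i)) (max (elog (c i) (B i)) (elog (c i) (C i)))) lf := by
          rw [genLogMGF_eq]
          exact Filter.limsup_le_limsup hev2
      _ = (δ : EReal) + Filter.limsup
          (fun i => max (elog (c i) (A i)) (max (elog (c i) (B i)) (elog (c i) (C i)))) lf :=
          limsup_const_add _ _
      _ = (δ : EReal) + max (Filter.limsup (fun i => elog (c i) (A i)) lf)
          (max (Filter.limsup (fun i => elog (c i) (B i)) lf)
            (Filter.limsup (fun i => elog (c i) (C i)) lf)) := by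
          rw [← limsup_max, ← limsup_max]
      _ = _ := by rw [hlimA, hlimB, hlimC]
  have hmax : (rt : EReal)
      ≤ max ((K1 + r1 : ℝ) : EReal) (max ((Kb : EReal) + Mfun lf μ c x ε) ((K2 + r2 : ℝ) : EReal)) :=
    ereal_le_of_forall_le_add hδ
  have hfinal : (rt : EReal) ≤ (Kb : EReal) + Mfun lf μ c x ε := by
    rcases le_max_iff.1 hmax with h1 | h2
    · exact absurd (EReal.coe_le_coe_iff.1 h1) (by linarith)
    rcases le_max_iff.1 h2 with h3 | h4
    · exact h3
    · exact absurd (EReal.coe_le_coe_iff.1 h4) (by linarith)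
  exact ereal_sub_const_le hfinal

end Tilt

/-! ### Convex analysis on the real line -/

section ConvexReal

/-- Left-derivative-like quantity: sup of slopes from the left over `(lam, t)`. -/
def Dm (l : ℝ → ℝ) (lam t : ℝ) : ℝ :=
  sSup ((fun s => (l t - l s) / (t - s)) '' Set.Ioo lam t)

variable {l : ℝ → ℝ} {lam t0 : ℝ}

lemma mem_Icc_of_Ioo (h0 : 0 ≤ lam) {s : ℝ} (hs : s ∈ Set.Ioo lam t0) : s ∈ Set.Icc 0 t0 :=
  ⟨le_of_lt (lt_of_le_of_lt h0 hs.1), hs.2.le⟩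

section DmLemmas

variable (hconv : ConvexOn ℝ (Set.Icc 0 t0) l) (h0 : 0 ≤ lam)

include hconv h0

lemma slope_mono_3 {a b c : ℝ} (ha : a ∈ Set.Icc 0 t0) (hc : c ∈ Set.Icc 0 t0)
    (hab : a < b) (hbc : b < c) :
    (l b - l a) / (b - a) ≤ (l c - l b) / (c - b) :=
  hconv.slope_mono_adjacent ha hc hab hbc

omit h0 in
lemma slope_mono_left {a b c : ℝ} (ha : a ∈ Set.Icc 0 t0) (hc : c ∈ Set.Icc 0 t0)
    (hab : a < b) (hbc : b < c) :
    (l b - l a) / (b - a) ≤ (l c - l a) / (c - a) :=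
  hconv.secant_mono_aux2 ha hc hab hbc

omit h0 in
lemma slope_mono_right {a b c : ℝ} (ha : a ∈ Set.Icc 0 t0) (hc : c ∈ Set.Icc 0 t0)
    (hab : a < b) (hbc : b < c) :
    (l c - l a) / (c - a) ≤ (l c - l b) / (c - b) :=
  hconv.secant_mono_aux3 ha hc hab hbc

lemma Dm_bddAbove {t : ℝ} (ht : t ∈ Set.Ioo lam t0) :
    BddAbove ((fun s => (l t - l s) / (t - s)) '' Set.Ioo lam t) := by
  refine ⟨(l t0 - l t) / (t0 - t), fun y hy => ?_⟩
  rcases hy with ⟨s, hs, rfl⟩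
  exact slope_mono_3 hconv h0 (mem_Icc_of_Ioo h0 ⟨hs.1, hs.2.trans ht.2⟩)
    ⟨le_trans h0 (le_of_lt (ht.1.trans ht.2)), le_rfl⟩ hs.2 ht.2

lemma leftslope_le_Dm {t s : ℝ} (ht : t ∈ Set.Ioo lam t0) (hs : s ∈ Set.Ioo lam t) :
    (l t - l s) / (t - s) ≤ Dm l lam t :=
  le_csSup (Dm_bddAbove hconv h0 ht) (Set.mem_image_of_mem _ hs)

lemma Dm_le_rightslope {t w : ℝ} (ht : t ∈ Set.Ioo lam t0) (hw : w ∈ Set.Ioc t t0) :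
    Dm l lam t ≤ (l w - l t) / (w - t) := by
  refine csSup_le ⟨(l t - l ((lam + t)/2)) / (t - (lam + t)/2),
    Set.mem_image_of_mem _ ⟨by linarith [ht.1], by linarith [ht.1]⟩⟩ ?_
  rintro y ⟨s, hs, rfl⟩
  exact slope_mono_3 hconv h0 ⟨h0.trans hs.1.le, (hs.2.trans ht.2).le⟩
    ⟨h0.trans (ht.1.trans hw.1).le, hw.2⟩ hs.2 hw.1

lemma Dm_mono {t u : ℝ} (ht : t ∈ Set.Ioo lam t0) (hu : u ∈ Set.Ioo lam t0) (h : t ≤ u) :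
    Dm l lam t ≤ Dm l lam u := by
  rcases eq_or_lt_of_le h with rfl | hlt
  · exact le_refl _
  refine csSup_le ⟨(l t - l ((lam + t)/2)) / (t - (lam + t)/2),
    Set.mem_image_of_mem _ ⟨by linarith [ht.1], by linarith [ht.1]⟩⟩ ?_
  rintro y ⟨s, hs, rfl⟩
  calc (l t - l s) / (t - s) ≤ (l u - l s) / (u - s) :=
        slope_mono_left hconv (mem_Icc_of_Ioo h0 ⟨hs.1, hs.2.trans ht.2⟩)
          (mem_Icc_of_Ioo h0 hu) hs.2 hlt
    _ ≤ Dm l lam u := leftslope_le_Dm hconv h0 hu ⟨hs.1, hs.2.trans hlt⟩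

lemma exists_left_slope_gt {t : ℝ} (ht : t ∈ Set.Ioo lam t0) {ρ : ℝ} (hρ : 0 < ρ) :
    ∃ s ∈ Set.Ioo lam t, Dm l lam t - ρ < (l t - l s) / (t - s) := by
  have hne : ((fun s => (l t - l s) / (t - s)) '' Set.Ioo lam t).Nonempty :=
    ⟨_, Set.mem_image_of_mem _ (show (lam + t)/2 ∈ Set.Ioo lam t by
      constructor <;> [linarith [ht.1]; linarith [ht.1]])⟩
  have : Dm l lam t - ρ < Dm l lam t := by linarith
  obtain ⟨y, hy, hlt⟩ := exists_lt_of_lt_csSup hne this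
  rcases hy with ⟨s, hs, rfl⟩
  exact ⟨s, hs, hlt⟩

lemma slope_mul_le_Dm {t s : ℝ} (ht : t ∈ Set.Ioo lam t0) (hs : s ∈ Set.Ioo lam t) :
    l t - l s ≤ Dm l lam t * (t - s) := by
  have h1 := leftslope_le_Dm hconv h0 ht hs
  have h2 : (0:ℝ) < t - s := by linarith [hs.2]
  calc l t - l s = (l t - l s) / (t - s) * (t - s) := by field_simp
    _ ≤ Dm l lam t * (t - s) := mul_le_mul_of_nonneg_right h1 h2.le

lemma slope_mul_lower {t s s0 : ℝ} (ht : t ∈ Set.Ioo lam t0) (hs0 : s0 ∈ Set.Ioo lam t)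
    (hs : s ∈ Set.Ioo s0 t) :
    (l t - l s0) / (t - s0) * (t - s) ≤ l t - l s := by
  have h1 : (l t - l s0) / (t - s0) ≤ (l t - l s) / (t - s) :=
    slope_mono_right hconv ⟨h0.trans hs0.1.le, (hs0.2.trans ht.2).le⟩
      ⟨h0.trans ht.1.le, ht.2.le⟩ hs.1 hs.2
  have h2 : (0:ℝ) < t - s := by linarith [hs.2]
  calc (l t - l s0) / (t - s0) * (t - s) ≤ (l t - l s) / (t - s) * (t - s) :=
        mul_le_mul_of_nonneg_right h1 h2.le
    _ = l t - l s := by field_simp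

lemma Dm_left_approx {t : ℝ} (ht : t ∈ Set.Ioo lam t0) {ρ : ℝ} (hρ : 0 < ρ) :
    ∃ δ : ℝ, 0 < δ ∧ ∀ s, t - δ < s → s < t →
      lam < s ∧ Dm l lam t - ρ < Dm l lam s := by
  obtain ⟨s', hs', hslope⟩ := exists_left_slope_gt hconv h0 ht (half_pos hρ)
  set φ : ℝ → ℝ := fun s => (l t - Dm l lam t * (t - s) - l s') / (s - s') with hφ
  have hts' : (0:ℝ) < t - s' := by linarith [hs'.2]
  have hφt : Dm l lam t - ρ < φ t := by
    have : φ t = (l t - l s') / (t - s') := by rw [hφ]; simp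
    rw [this]
    calc Dm l lam t - ρ < Dm l lam t - ρ/2 := by linarith
      _ < (l t - l s') / (t - s') := hslope
  have hφcont : ContinuousAt φ t := by
    apply ContinuousAt.div
    · fun_prop
    · fun_prop
    · simpa using hts'.ne'
  have hev : ∀ᶠ s in nhds t, Dm l lam t - ρ < φ s :=
    hφcont.eventually_mem (Ioi_mem_nhds hφt)
  obtain ⟨δ₁, hδ₁, hball⟩ := Metric.eventually_nhds_iff.1 hev
  refine ⟨min δ₁ ((t - s')/2), lt_min hδ₁ (by linarith), fun s hs1 hs2 => ?_⟩
  have hs'lt : s' < s := by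
    have := min_le_right δ₁ ((t - s')/2)
    linarith [hs1]
  have hlam_s : lam < s := hs'.1.trans hs'lt
  refine ⟨hlam_s, ?_⟩
  have hdist : dist s t < δ₁ := by
    rw [Real.dist_eq, abs_of_nonpos (by linarith)]
    have := min_le_left δ₁ ((t - s')/2)
    linarith
  have hφs := hball hdist
  have hsIoo : s ∈ Set.Ioo lam t0 := ⟨hlam_s, hs2.trans ht.2⟩
  have hls : l t - Dm l lam t * (t - s) ≤ l s := by
    have := slope_mul_le_Dm hconv h0 ht ⟨hlam_s, hs2⟩
    linarith
  have hss' : (0:ℝ) < s - s' := by linarith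
  have hchain : φ s ≤ (l s - l s') / (s - s') :=
    div_le_div_of_nonneg_right (by linarith) hss'.le
  calc Dm l lam t - ρ < φ s := hφs
    _ ≤ (l s - l s') / (s - s') := hchain
    _ ≤ Dm l lam s := leftslope_le_Dm hconv h0 hsIoo ⟨hs'.1, hs'lt⟩

lemma exists_good {t : ℝ} (ht : t ∈ Set.Ioo lam t0) {δ : ℝ} (hδ : 0 < δ) :
    ∃ s, s ∈ Set.Ioo lam t0 ∧ t - δ < s ∧ s < t ∧
      ∀ ρ : ℝ, 0 < ρ → ∃ w, w ∈ Set.Ioo s t0 ∧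
        (l w - l s) / (w - s) < Dm l lam s + ρ := by
  set m := max lam (t - δ) with hm
  have hmt : m < t := max_lt ht.1 (by linarith)
  set a0 := (m + t)/2 with ha0def
  set b0 := (a0 + t)/2 with hb0def
  have hma0 : m < a0 := by rw [ha0def]; linarith
  have ha0b0 : a0 < b0 := by rw [hb0def]; linarith [hma0]
  have hb0t : b0 < t := by rw [hb0def]; linarith [hma0]
  have hlam_a0 : lam < a0 := (le_max_left lam (t - δ)).trans_lt hma0
  have htδ_a0 : t - δ < a0 := (le_max_right lam (t - δ)).trans_lt hma0
  have hb0t0 : b0 < t0 := hb0t.trans ht.2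
  have hclampmem : ∀ u : ℝ, max a0 (min u b0) ∈ Set.Ioo lam t0 := by
    intro u
    constructor
    · exact hlam_a0.trans_le (le_max_left _ _)
    · refine max_lt (ha0b0.trans hb0t0) ?_
      exact lt_of_le_of_lt (min_le_right _ _) hb0t0
  set g : ℝ → ℝ := fun u => Dm l lam (max a0 (min u b0)) with hg
  have hgmono : Monotone g := by
    intro u v huv
    exact Dm_mono hconv h0 (hclampmem u) (hclampmem v)
      (max_le_max le_rfl (min_le_min huv le_rfl))
  have hcount : Set.Countable {u : ℝ | ¬ContinuousAt g u} :=
    hgmono.countable_not_continuousAt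
  have hnotsub : ¬ (Set.Ioo a0 b0 ⊆ {u : ℝ | ¬ContinuousAt g u}) := by
    intro hsub
    have hcnt : (Set.Ioo a0 b0).Countable := hcount.mono hsub
    have h1 : (Cardinal.mk (Set.Ioo a0 b0)) ≤ Cardinal.aleph0 :=
      Cardinal.le_aleph0_iff_set_countable.2 hcnt
    rw [Cardinal.mk_Ioo_real ha0b0] at h1
    exact absurd h1 (not_le.2 Cardinal.aleph0_lt_continuum)
  obtain ⟨s, hsmem, hscont⟩ := Set.not_subset.1 hnotsub
  rw [Set.mem_setOf_eq, not_not] at hscont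
  have hclamp_s : ∀ u ∈ Set.Ioo a0 b0, max a0 (min u b0) = u := by
    intro u hu
    rw [min_eq_left hu.2.le, max_eq_right hu.1.le]
  have hsIoo : s ∈ Set.Ioo lam t0 := ⟨hlam_a0.trans hsmem.1, hsmem.2.trans hb0t0⟩
  refine ⟨s, hsIoo, htδ_a0.trans hsmem.1, hsmem.2.trans hb0t, ?_⟩
  intro ρ hρ
  have hgs : g s = Dm l lam s := by rw [hg]; simp only; rw [hclamp_s s hsmem]
  have hev : ∀ᶠ u in nhds s, g u < g s + ρ :=
    hscont.eventually_mem (Iio_mem_nhds (by linarith))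
  obtain ⟨δ₂, hδ₂, hball⟩ := Metric.eventually_nhds_iff.1 hev
  set u := min (s + δ₂/2) ((s + b0)/2) with hu
  have hsu : s < u := lt_min (by linarith) (by linarith [hsmem.2])
  have hub0 : u < b0 := (min_le_right _ _).trans_lt (by linarith [hsmem.2])
  have hdistu : dist u s < δ₂ := by
    rw [Real.dist_eq, abs_of_pos (by linarith)]
    have := min_le_left (s + δ₂/2) ((s + b0)/2)
    linarith
  have hgu := hball hdistu
  have hgu' : Dm l lam u < Dm l lam s + ρ := by
    have : g u = Dm l lam u := by
      rw [hg]; simp only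
      rw [hclamp_s u ⟨hsmem.1.trans hsu, hub0⟩]
    rw [this, hgs] at hgu
    exact hgu
  have huIoo : u ∈ Set.Ioo lam t0 := ⟨hsIoo.1.trans hsu, hub0.trans hb0t0⟩
  refine ⟨u, ⟨hsu, huIoo.2⟩, ?_⟩
  calc (l u - l s) / (u - s) ≤ Dm l lam u :=
        leftslope_le_Dm hconv h0 huIoo ⟨hsIoo.1, hsu⟩
    _ < Dm l lam s + ρ := hgu'

end DmLemmas

end ConvexReal

/-! ### Key inequality and assembly -/

section Main

variable {ι : Type*} (lf : Filter ι) [lf.NeBot] (μ : ι → Measure ℝ)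
  [∀ i, IsProbabilityMeasure (μ i)] (c : ι → ℝ) (hc : ∀ i, 0 < c i)

include hc

lemma key_ineq (hc0 : Filter.Tendsto c lf (nhds (0:ℝ)))
    {lam t0 : ℝ} (h0lam : 0 ≤ lam) {l : ℝ → ℝ}
    (hl : ∀ s ∈ Set.Icc (0:ℝ) t0, genLogMGF lf μ c s = ((l s : ℝ) : EReal))
    (hconv : ConvexOn ℝ (Set.Icc 0 t0) l)
    {t : ℝ} (ht : t ∈ Set.Ioo lam t0) :
    ((l t - t * Dm l lam t : ℝ) : EReal)
      ≤ ⨅ ε ∈ Set.Ioi (0:ℝ), Mfun lf μ c (Dm l lam t) ε := by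
  set xt := Dm l lam t with hxtdef
  have ht0 : 0 ≤ t := h0lam.trans ht.1.le
  refine inf_Mfun_ge lf μ c hc (K := t + 1) (by linarith) ?_
  intro ε hε
  obtain ⟨δ₁, hδ₁, happrox⟩ := Dm_left_approx hconv h0lam ht (half_pos hε)
  set δ := min δ₁ ((t - lam)/2) with hδdef
  have hδpos : 0 < δ := lt_min hδ₁ (by linarith [ht.1])
  obtain ⟨s, hsIoo, hsl, hst, hgood⟩ := exists_good hconv h0lam ht hδpos
  set xs := Dm l lam s with hxsdef
  have hsl1 : t - δ₁ < s := by
    have := min_le_left δ₁ ((t - lam)/2)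
    linarith
  obtain ⟨-, hxs_lb⟩ := happrox s hsl1 hst
  have hxs_ub : xs ≤ xt := Dm_mono hconv h0lam hsIoo ht hst.le
  have hs0 : (0:ℝ) ≤ s := h0lam.trans hsIoo.1.le
  -- tilt at s
  obtain ⟨s1, hs1, hslope1⟩ := exists_left_slope_gt hconv h0lam hsIoo (half_pos hε)
  obtain ⟨w, hw, hslope2⟩ := hgood (ε/2) (half_pos hε)
  have hs_Icc : s ∈ Set.Icc (0:ℝ) t0 := mem_Icc_of_Ioo h0lam hsIoo
  have hs1_Icc : s1 ∈ Set.Icc (0:ℝ) t0 :=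
    mem_Icc_of_Ioo h0lam ⟨hs1.1, hs1.2.trans hsIoo.2⟩
  have hw_Icc : w ∈ Set.Icc (0:ℝ) t0 := mem_Icc_of_Ioo h0lam ⟨hsIoo.1.trans hw.1, hw.2⟩
  have hs1s : (0:ℝ) < s - s1 := by linarith [hs1.2]
  have hws : (0:ℝ) < w - s := by linarith [hw.1]
  have htilt : ((l s - s * (xs + ε/2) : ℝ) : EReal) ≤ Mfun lf μ c xs (ε/2) := by
    have hmul1 : (xs - ε/2) * (s - s1) < l s - l s1 := (lt_div_iff₀ hs1s).1 hslope1
    have hmul2 : l w - l s < (xs + ε/2) * (w - s) := (div_lt_iff₀ hws).1 hslope2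
    exact tilt lf μ c hc hc0 hs0 hs1.2 hw.1 (hl s hs_Icc) (hl s1 hs1_Icc) (hl w hw_Icc)
      (by nlinarith) (by nlinarith)
  have hmono : Mfun lf μ c xs (ε/2) ≤ Mfun lf μ c xt ε :=
    Mfun_mono lf μ c hc (Set.Ioo_subset_Ioo (by linarith) (by linarith))
  refine le_trans ?_ (htilt.trans hmono)
  rw [EReal.coe_le_coe_iff]
  have hl_ub : l t - l s ≤ xt * (t - s) := slope_mul_le_Dm hconv h0lam ht ⟨hsIoo.1, hst⟩
  have h1 : s * xs ≤ s * xt := mul_le_mul_of_nonneg_left hxs_ub hs0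
  have h2 : s * ε ≤ t * ε := mul_le_mul_of_nonneg_right hst.le hε.le
  nlinarith

end Main

end Aux13

end

theorem statement13
    {ι : Type*} (lf : Filter ι) [lf.NeBot]
    (μ : ι → Measure ℝ) [∀ i, IsProbabilityMeasure (μ i)]
    (c : ι → ℝ) (hc : ∀ i, 0 < c i) (hc0 : Filter.Tendsto c lf (nhds (0 : ℝ)))
    (L : ℝ → EReal) (hL : L = genLogMGF lf μ c)
    (lam : ℝ) (hlam : 0 ≤ lam) (hp : LbarProper L)
    (hfin : ∃ t : ℝ, lam < t ∧ L t ≠ ⊤) :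
    ∃ e : ℝ, 0 < e ∧ ∀ t ∈ Set.Ioo lam (lam + e),
      L t = (⨆ x : ℝ, (((t * x : ℝ)) : EReal) - l0fun lf μ c x) ∧
      ∃ xt : ℝ, L t = (((t * xt : ℝ)) : EReal) - l0fun lf μ c xt := by
  subst hL
  obtain ⟨t0, hlt0, ht0ne⟩ := hfin
  have hbot := hp.1
  have ht0pos : 0 < t0 := lt_of_le_of_lt hlam hlt0
  have ht0bot : genLogMGF lf μ c t0 ≠ ⊥ := hbot t0 ht0pos.le
  obtain ⟨r0, hr0⟩ : ∃ r : ℝ, genLogMGF lf μ c t0 = (r : EReal) := by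
    lift genLogMGF lf μ c t0 to ℝ using ⟨ht0ne, ht0bot⟩ with r
    exact ⟨r, rfl⟩
  have hreal := Aux13.genLogMGF_real_on_Icc lf μ c hc ht0pos r0 hr0 hbot
  set l : ℝ → ℝ := fun s => (genLogMGF lf μ c s).toReal with hldef
  have hlcoe : ∀ s ∈ Set.Icc (0:ℝ) t0, genLogMGF lf μ c s = ((l s : ℝ) : EReal) := by
    intro s hs
    obtain ⟨r, hr⟩ := hreal s hs
    rw [hldef]
    simp only [hr, EReal.toReal_coe]
  have hconv : ConvexOn ℝ (Set.Icc 0 t0) l :=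
    Aux13.convexOn_ell lf μ c hc ht0pos r0 hr0 hbot
  refine ⟨(t0 - lam)/2, by linarith, ?_⟩
  intro t htmem
  have htIoo : t ∈ Set.Ioo lam t0 := ⟨htmem.1, by have := htmem.2; linarith⟩
  have ht_Icc : t ∈ Set.Icc (0:ℝ) t0 := Aux13.mem_Icc_of_Ioo hlam htIoo
  set xt := Aux13.Dm l lam t with hxtdef
  have hkey := Aux13.key_ineq lf μ c hc hc0 hlam hlcoe hconv htIoo
  have hLt : genLogMGF lf μ c t = ((l t : ℝ) : EReal) := hlcoe t ht_Icc
  have hlow : genLogMGF lf μ c t ≤ ((t * xt : ℝ) : EReal) - l0fun lf μ c xt := by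
    rw [Aux13.l0fun_eq, sub_eq_add_neg, neg_neg, hLt]
    calc ((l t : ℝ) : EReal) = ((t * xt : ℝ) : EReal) + ((l t - t * xt : ℝ) : EReal) := by
          rw [← EReal.coe_add]
          norm_cast
          ring
      _ ≤ _ := add_le_add_right hkey _
  have hup : ∀ x : ℝ, ((t * x : ℝ) : EReal) - l0fun lf μ c x ≤ genLogMGF lf μ c t :=
    fun x => Aux13.cheby_l0 lf μ c hc t x (hlam.trans htIoo.1.le)
  constructor
  · refine le_antisymm ?_ (iSup_le hup)
    exact hlow.trans (le_iSup (fun x => ((t * x : ℝ) : EReal) - l0fun lf μ c x) xt)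
  · exact ⟨xt, le_antisymm hlow (hup xt)⟩
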